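/- Let M = (M_1,…,M_d) be a d-outcome POVM on ℂ^d, let P be the computational-basis POVM with effects P_i = E_ii, and let D be the d-outcome POVM whose i-th effect D_i is the diagonal part of M_i (the diagonal matrix with the same diagonal entries as M_i). Then d_av^m(D, P) ≤ d_av^m(M, P). -/

import Mathlib

open Matrix ComplexOrder

/-- The Hilbert–Schmidt (Frobenius) norm of a complex matrix. -/
noncomputable def hsNorm {n : Type*} [Fintype n] (A : Matrix n n ℂ) : ℝ :=
  Real.sqrt ((Matrix.trace (Aᴴ * A)).re)

/-- A POVM: a tuple of positive semidefinite effects summing to the identity. -/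
def IsPOVM {n : Type*} [Fintype n] [DecidableEq n] {ι : Type*} [Fintype ι]
    (M : ι → Matrix n n ℂ) : Prop :=
  (∀ i, (M i).PosSemidef) ∧ ∑ i, M i = 1

/-- The average-case distance between POVMs on a `Fintype.card n`-dimensional space. -/
noncomputable def davM {n : Type*} [Fintype n] {ι : Type*} [Fintype ι]
    (M N : ι → Matrix n n ℂ) : ℝ :=
  (1 / (2 * (Fintype.card n : ℝ))) *
    ∑ i, Real.sqrt ((hsNorm (M i - N i)) ^ 2 + ((Matrix.trace (M i - N i)).re) ^ 2)

lemma trace_re_eq {n : Type*} [Fintype n] (A : Matrix n n ℂ) :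
    (Matrix.trace (Aᴴ * A)).re = ∑ l, ∑ k, Complex.normSq (A k l) := by
  simp only [Matrix.trace, Matrix.diag, Matrix.mul_apply, Matrix.conjTranspose_apply,
    Complex.re_sum]
  refine Finset.sum_congr rfl fun l _ => Finset.sum_congr rfl fun k _ => ?_
  rw [Complex.star_def, ← Complex.normSq_eq_conj_mul_self]
  simp

lemma hsNorm_sq {n : Type*} [Fintype n] (A : Matrix n n ℂ) :
    hsNorm A ^ 2 = ∑ l, ∑ k, Complex.normSq (A k l) := by
  rw [hsNorm, Real.sq_sqrt (by rw [trace_re_eq]; exact Finset.sum_nonneg fun l _ => Finset.sum_nonneg fun k _ => Complex.normSq_nonneg _)]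
  exact trace_re_eq A

theorem statement18 (d : ℕ) (M : Fin d → Matrix (Fin d) (Fin d) ℂ) (hM : IsPOVM M) :
    davM (fun i : Fin d => Matrix.diagonal (fun k => M i k k))
        (fun i : Fin d => Matrix.single i i (1 : ℂ)) ≤
      davM M (fun i : Fin d => Matrix.single i i (1 : ℂ)) := by
  unfold davM
  refine mul_le_mul_of_nonneg_left ?_ (by positivity)
  refine Finset.sum_le_sum fun i _ => ?_
  set P : Matrix (Fin d) (Fin d) ℂ := Matrix.single i i (1 : ℂ) with hP
  have htr : Matrix.trace (Matrix.diagonal (fun k => M i k k) - P)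
      = Matrix.trace (M i - P) := by
    simp [Matrix.trace, Matrix.diag]
  rw [htr]
  refine Real.sqrt_le_sqrt (add_le_add_left ?_ _)
  rw [hsNorm_sq, hsNorm_sq]
  refine Finset.sum_le_sum fun l _ => ?_
  have hdiagP : ∀ k l : Fin d, k = l → P k l = P k k := by intro k l h; rw [h]
  calc ∑ k, Complex.normSq ((Matrix.diagonal (fun k => M i k k) - P) k l)
      = Complex.normSq ((M i - P) l l) := by
        rw [Finset.sum_eq_single l]
        · simp [Matrix.diagonal, Matrix.sub_apply]
        · intro k _ hk
          have hPkl : P k l = 0 := by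
            simp [hP, Matrix.single, Matrix.of_apply]
            intro h1 h2
            exact absurd (h1.symm.trans h2) hk
          simp [Matrix.diagonal, Matrix.sub_apply, hk, hPkl]
        · intro h; exact absurd (Finset.mem_univ l) h
    _ ≤ ∑ k, Complex.normSq ((M i - P) k l) := by
        refine Finset.single_le_sum (f := fun k => Complex.normSq ((M i - P) k l)) (fun k _ => Complex.normSq_nonneg _) (Finset.mem_univ l)
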